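/- The string group L(p) has rank one: the canonical element c has infinite order, and the torsion subgroup of L(p) equals the kernel of the degree map δ: L(p) → ℤ defined by δ(x_i) = p/p_i, where p = lcm(p_1,...,p_t). -/

import Mathlib

open scoped BigOperators

def stringRelators {ι : Type} [DecidableEq ι] (p : ι → ℕ) : Set (ι → ℤ) :=
  { v | ∃ i j : ι, v = (p i : ℤ) • Pi.single i 1 - (p j : ℤ) • Pi.single j 1 }

abbrev StringGroup {ι : Type} [DecidableEq ι] (p : ι → ℕ) : Type :=
  (ι → ℤ) ⧸ AddSubgroup.closure (stringRelators p)

def xgen {ι : Type} [DecidableEq ι] (p : ι → ℕ) (i : ι) : StringGroup p :=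
  QuotientAddGroup.mk (Pi.single i 1)

def canon {ι : Type} [DecidableEq ι] (p : ι → ℕ) (i : ι) : StringGroup p :=
  (p i : ℤ) • xgen p i

section Aux

variable {t : ℕ} (p : Fin (t+1) → ℕ)

/-- The degree map on the free group. -/
def delta0 : (Fin (t+1) → ℤ) →+ ℤ where
  toFun v := ∑ i, v i * (((Finset.univ.lcm p) / p i : ℕ) : ℤ)
  map_zero' := by simp
  map_add' v w := by
    simp [add_mul, Finset.sum_add_distrib]

lemma delta0_single (i : Fin (t+1)) :
    delta0 p (Pi.single i 1) = (((Finset.univ.lcm p) / p i : ℕ) : ℤ) := by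
  simp only [delta0, AddMonoidHom.coe_mk, ZeroHom.coe_mk]
  rw [Finset.sum_eq_single i]
  · simp
  · intro j _ hj; simp [Pi.single_apply, hj]
  · simp

lemma delta0_vanish (hp : ∀ i, 2 ≤ p i) :
    ∀ v ∈ AddSubgroup.closure (stringRelators p), delta0 p v = 0 := by
  have hle : AddSubgroup.closure (stringRelators p) ≤ (delta0 p).ker := by
    rw [AddSubgroup.closure_le]
    rintro w ⟨i, j, rfl⟩
    simp only [SetLike.mem_coe, AddMonoidHom.mem_ker, map_sub, map_zsmul,
      delta0_single, smul_eq_mul]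
    rw [← Nat.cast_mul, Nat.mul_div_cancel' (Finset.dvd_lcm (Finset.mem_univ i)),
      ← Nat.cast_mul, Nat.mul_div_cancel' (Finset.dvd_lcm (Finset.mem_univ j)), sub_self]
  exact fun v hv => hle hv

lemma canon_eq (i j : Fin (t+1)) : canon p i = canon p j := by
  rw [← sub_eq_zero]
  have h0 : ((p i : ℤ) • Pi.single i 1 - (p j : ℤ) • Pi.single j 1 : Fin (t+1) → ℤ)
      ∈ AddSubgroup.closure (stringRelators p) :=
    AddSubgroup.subset_closure ⟨i, j, rfl⟩
  have h := (QuotientAddGroup.eq_zero_iff _).2 h0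
  have h2 : ((QuotientAddGroup.mk ((p i : ℤ) • Pi.single i 1 - (p j : ℤ) • Pi.single j 1) :
      StringGroup p)) = canon p i - canon p j := by
    rw [show (QuotientAddGroup.mk : (Fin (t+1) → ℤ) → StringGroup p)
        = ⇑(QuotientAddGroup.mk' _) from rfl, map_sub, map_zsmul, map_zsmul]
    rfl
  rw [← h2]; exact h

end Aux

theorem stmt2 {t : ℕ} (p : Fin (t+1) → ℕ) (hp : ∀ i, 2 ≤ p i) :
    (∀ n : ℕ, 0 < n → n • canon p 0 ≠ 0) ∧
    ∃ δ : StringGroup p →+ ℤ,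
      (∀ i, δ (xgen p i) = ((Finset.univ.lcm p) / p i : ℕ)) ∧
      AddCommGroup.torsion (StringGroup p) = δ.ker := by
  set L : ℕ := Finset.univ.lcm p with hL
  have hLpos : 0 < L := Nat.pos_of_ne_zero (by
    rw [hL]
    intro h
    rw [Finset.lcm_eq_zero_iff] at h
    obtain ⟨i, _, hi⟩ := h
    have := hp i
    omega)
  set δ : StringGroup p →+ ℤ :=
    QuotientAddGroup.lift _ (delta0 p) (delta0_vanish p hp) with hδ
  have hδx : ∀ i, δ (xgen p i) = ((L / p i : ℕ) : ℤ) := fun i => delta0_single p i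
  have key : ∀ g : StringGroup p, (L : ℤ) • g = δ g • canon p 0 := by
    intro g
    induction g using QuotientAddGroup.induction_on with
    | H v =>
      have hv : (QuotientAddGroup.mk v : StringGroup p) = ∑ i, v i • xgen p i := by
        conv_lhs => rw [show v = ∑ i, v i • Pi.single i (1 : ℤ) from by
          ext j; simp [Pi.single_apply]]
        rw [show (QuotientAddGroup.mk : (Fin (t+1) → ℤ) → StringGroup p)
            = ⇑(QuotientAddGroup.mk' _) from rfl, map_sum]
        simp_rw [map_zsmul]
        rfl
      rw [hv, Finset.smul_sum (M := ℤ) (N := StringGroup p)]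
      have hterm : ∀ i : Fin (t+1),
          (L : ℤ) • (v i • xgen p i) = (v i * ((L / p i : ℕ) : ℤ)) • canon p 0 := by
        intro i
        have hdvd : ((L / p i : ℕ) : ℤ) * (p i : ℤ) = (L : ℤ) := by
          rw [← Nat.cast_mul, Nat.div_mul_cancel (Finset.dvd_lcm (Finset.mem_univ i))]
        rw [← canon_eq p i 0]
        simp only [canon, smul_smul]
        congr 1
        rw [mul_assoc, hdvd, mul_comm]
      rw [Finset.sum_congr rfl (fun i _ => hterm i), ← Finset.sum_smul]
      congr 1
      have h1 : δ (QuotientAddGroup.mk v) = delta0 p v := rfl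
      rw [hv] at h1
      rw [h1]
      rfl
  have hδc : δ (canon p 0) = (L : ℤ) := by
    rw [show canon p 0 = (p 0 : ℤ) • xgen p 0 from rfl, map_zsmul, hδx, smul_eq_mul,
      ← Nat.cast_mul, Nat.mul_div_cancel' (Finset.dvd_lcm (Finset.mem_univ 0))]
  constructor
  · intro n hn h
    have h0 : δ (n • canon p 0) = 0 := by rw [h, map_zero]
    rw [map_nsmul, hδc, nsmul_eq_mul] at h0
    rcases mul_eq_zero.mp h0 with h1 | h1
    · have : n = 0 := by exact_mod_cast h1
      omega
    · have : L = 0 := by exact_mod_cast h1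
      omega
  · refine ⟨δ, hδx, ?_⟩
    ext g
    simp only [AddMonoidHom.mem_ker]
    rw [AddCommGroup.mem_torsion]
    constructor
    · intro hg
      obtain ⟨n, hn, hng⟩ := isOfFinAddOrder_iff_nsmul_eq_zero.1 hg
      have h0 : δ (n • g) = 0 := by rw [hng, map_zero]
      rw [map_nsmul, nsmul_eq_mul] at h0
      rcases mul_eq_zero.mp h0 with h1 | h1
      · exfalso
        have : n = 0 := by exact_mod_cast h1
        omega
      · exact h1
    · intro hg
      rw [isOfFinAddOrder_iff_nsmul_eq_zero]
      refine ⟨L, hLpos, ?_⟩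
      have h := key g
      rw [hg] at h
      rw [← natCast_zsmul]
      simpa using h
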